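/- arXiv:1907.05593 — 2 statements merged into one kernel-verified Lean document; each statement's English description precedes it below -/
import Mathlib

section
/- Under Assumptions 1 and 3, for every N≥1 there exists α_N∈(0,1) such that for every vector (h_1,…,h_N)∈ℝ^N with ∑_{i=1}^N h_i²=1 one has P(∑_{i=1}^N h_i(ε_i−b_i) < −α_N) > α_N (quantitative no-arbitrage condition in the small market with N random sources). -/
open MeasureTheory Filter Topology ProbabilityTheory

lemma exists_gap {Ω : Type*} [MeasurableSpace Ω] (P : Measure Ω)
    (X : Ω → ℝ) (c : ℝ) (h : 0 < P {ω | X ω < c}) :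
    ∃ d : ℝ, 0 < d ∧ 0 < P {ω | X ω < c - d} := by
  by_contra hcon
  push_neg at hcon
  have hz : ∀ n : ℕ, P {ω | X ω < c - 1 / (n + 1)} = 0 := by
    intro n
    exact le_antisymm (hcon (1 / (n + 1)) (by positivity)) zero_le
  have hsub : {ω | X ω < c} ⊆ ⋃ n : ℕ, {ω | X ω < c - 1 / (n + 1)} := by
    intro ω hω
    simp only [Set.mem_setOf_eq] at hω
    obtain ⟨n, hn⟩ := exists_nat_one_div_lt (show (0:ℝ) < c - X ω by linarith)
    exact Set.mem_iUnion.2 ⟨n, by simp only [Set.mem_setOf_eq]; linarith⟩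
  have := (measure_mono hsub).trans_eq (measure_iUnion_null hz)
  exact absurd (le_antisymm this zero_le) (ne_of_gt h)

/-- under Assumptions 1 and 3, for every `N ≥ 1` there is
`α_N ∈ (0,1)` such that every unit vector `(h_1,…,h_N)` satisfies the
quantitative no-arbitrage condition
`P(∑_{i=1}^N h_i (ε_i - b_i) < -α_N) > α_N`. -/
theorem quantitative_no_arbitrage_small_market
    {Ω : Type*} [MeasurableSpace Ω] (P : Measure Ω) [IsProbabilityMeasure P]
    (ε : ℕ → Ω → ℝ) (b : ℕ → ℝ)
    (hmeas : ∀ i, Measurable (ε i))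
    (hL2 : ∀ i, MemLp (ε i) 2 P)
    (hindep : iIndepFun ε P)
    (hmean : ∀ i, ∫ ω, ε i ω ∂P = 0)
    (hvar : ∀ i, ∫ ω, (ε i ω) ^ 2 ∂P = 1)
    (hNA : ∀ i, 0 < P {ω | b i < ε i ω} ∧ 0 < P {ω | ε i ω < b i})
    (N : ℕ) (hN : 1 ≤ N) :
    ∃ α : ℝ, α ∈ Set.Ioo (0 : ℝ) 1 ∧
      ∀ h : Fin N → ℝ, (∑ i, (h i) ^ 2) = 1 →
        ENNReal.ofReal α <
          P {ω | ∑ i : Fin N, h i * (ε i ω - b i) < -α} := by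
  -- Step 1: gaps on both sides
  have gap1 : ∀ i, ∃ d : ℝ, 0 < d ∧ 0 < P {ω | ε i ω < b i - d} := fun i =>
    exists_gap P (ε i) (b i) (hNA i).2
  have gap2 : ∀ i, ∃ d : ℝ, 0 < d ∧ 0 < P {ω | b i + d < ε i ω} := by
    intro i
    have h0 : {ω | (fun ω => -(ε i ω)) ω < -(b i)} = {ω | b i < ε i ω} := by
      ext ω; simp only [Set.mem_setOf_eq]; constructor <;> intro <;> linarith
    obtain ⟨d, hd, hP⟩ := exists_gap P (fun ω => -(ε i ω)) (-(b i)) (by rw [h0]; exact (hNA i).1)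
    refine ⟨d, hd, ?_⟩
    have h1 : {ω | (fun ω => -(ε i ω)) ω < -(b i) - d} = {ω | b i + d < ε i ω} := by
      ext ω; simp only [Set.mem_setOf_eq]; constructor <;> intro <;> linarith
    rwa [h1] at hP
  choose d1 hd1 hP1 using gap1
  choose d2 hd2 hP2 using gap2
  have hne : (Finset.range N).Nonempty := Finset.nonempty_range_iff.2 (by omega)
  set δ : ℝ := (Finset.range N).inf' hne (fun i => min (d1 i) (d2 i)) with hδdef
  have hδpos : 0 < δ := by
    rw [hδdef, Finset.lt_inf'_iff]
    exact fun i _ => lt_min (hd1 i) (hd2 i)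
  have hδ1 : ∀ i ∈ Finset.range N, 0 < P {ω | ε i ω < b i - δ} := by
    intro i hi
    refine lt_of_lt_of_le (hP1 i) (measure_mono ?_)
    intro ω hω
    simp only [Set.mem_setOf_eq] at hω ⊢
    have : δ ≤ d1 i := (Finset.inf'_le _ hi).trans (min_le_left _ _)
    linarith
  have hδ2 : ∀ i ∈ Finset.range N, 0 < P {ω | b i + δ < ε i ω} := by
    intro i hi
    refine lt_of_lt_of_le (hP2 i) (measure_mono ?_)
    intro ω hω
    simp only [Set.mem_setOf_eq] at hω ⊢
    have : δ ≤ d2 i := (Finset.inf'_le _ hi).trans (min_le_right _ _)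
    linarith
  set m : ℕ → ENNReal := fun i => min (P {ω | ε i ω < b i - δ}) (P {ω | b i + δ < ε i ω}) with hm
  set q : ENNReal := ∏ i ∈ Finset.range N, m i with hq
  have hq0 : 0 < q := by
    rw [hq, CanonicallyOrderedAdd.prod_pos]
    exact fun i hi => lt_min (hδ1 i hi) (hδ2 i hi)
  have hq1 : q ≤ 1 := by
    refine Finset.prod_le_one (fun i _ => zero_le) (fun i _ => ?_)
    exact (min_le_left _ _).trans prob_le_one
  have hqfin : q ≠ ⊤ := (hq1.trans_lt (by norm_num)).ne
  set r : ℝ := q.toReal with hr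
  have hr0 : 0 < r := ENNReal.toReal_pos hq0.ne' hqfin
  have hr1 : r ≤ 1 := by
    rw [hr]
    calc q.toReal ≤ (1 : ENNReal).toReal := ENNReal.toReal_mono (by norm_num) hq1
      _ = 1 := by simp
  refine ⟨min δ r / 2, ⟨by positivity, by
    have := min_le_right δ r; linarith⟩, ?_⟩
  intro h hsum
  set α : ℝ := min δ r / 2 with hα
  have hαδ : α < δ := by have := min_le_left δ r; rw [hα]; linarith
  have hαr : α < r := by have := min_le_right δ r; rw [hα]; linarith
  -- the events
  set A : ℕ → Set Ω := fun i =>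
    if hi : i < N then
      (if 0 ≤ h ⟨i, hi⟩ then {ω | ε i ω < b i - δ} else {ω | b i + δ < ε i ω})
    else Set.univ with hA
  have hAmeas : ∀ i ∈ Finset.range N,
      MeasurableSet[Real.measurableSpace.comap (ε i)] (A i) := by
    intro i hi
    rw [Finset.mem_range] at hi
    rw [hA]
    simp only [dif_pos hi]
    by_cases hs : 0 ≤ h ⟨i, hi⟩
    · rw [if_pos hs]
      exact ⟨Set.Iio (b i - δ), measurableSet_Iio, rfl⟩
    · rw [if_neg hs]
      exact ⟨Set.Ioi (b i + δ), measurableSet_Ioi, rfl⟩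
  have hprod : P (⋂ i ∈ Finset.range N, A i) = ∏ i ∈ Finset.range N, P (A i) :=
    hindep.meas_biInter hAmeas
  have hmle : ∀ i ∈ Finset.range N, m i ≤ P (A i) := by
    intro i hi
    rw [Finset.mem_range] at hi
    rw [hA]
    simp only [dif_pos hi]
    by_cases hs : 0 ≤ h ⟨i, hi⟩
    · rw [if_pos hs]; exact min_le_left _ _
    · rw [if_neg hs]; exact min_le_right _ _
  -- the pointwise bound
  have habs : (1:ℝ) ≤ ∑ i : Fin N, |h i| := by
    have h1 : ∑ i : Fin N, |h i| ^ 2 ≤ (∑ i : Fin N, |h i|) ^ 2 :=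
      Finset.sum_sq_le_sq_sum_of_nonneg (fun i _ => abs_nonneg _)
    have h2 : ∑ i : Fin N, |h i| ^ 2 = 1 := by
      rw [← hsum]; exact Finset.sum_congr rfl (fun i _ => sq_abs _)
    have h3 : 0 ≤ ∑ i : Fin N, |h i| := Finset.sum_nonneg (fun i _ => abs_nonneg _)
    nlinarith
  have hsubset : (⋂ i ∈ Finset.range N, A i) ⊆
      {ω | ∑ i : Fin N, h i * (ε i ω - b i) < -α} := by
    intro ω hω
    simp only [Set.mem_iInter] at hω
    have hterm : ∀ i : Fin N, h i * (ε (i : ℕ) ω - b (i : ℕ)) ≤ -(|h i| * δ) := by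
      intro i
      have hωi := hω (i : ℕ) (Finset.mem_range.2 i.isLt)
      rw [hA] at hωi
      simp only [dif_pos i.isLt] at hωi
      have heta : (⟨(i : ℕ), i.isLt⟩ : Fin N) = i := rfl
      rw [heta] at hωi
      by_cases hs : 0 ≤ h i
      · rw [if_pos hs] at hωi
        simp only [Set.mem_setOf_eq] at hωi
        rw [abs_of_nonneg hs]
        nlinarith
      · rw [if_neg hs] at hωi
        simp only [Set.mem_setOf_eq] at hωi
        push_neg at hs
        rw [abs_of_neg hs]
        nlinarith
    have hsumle : ∑ i : Fin N, h i * (ε (i : ℕ) ω - b (i : ℕ)) ≤ -δ := by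
      calc ∑ i : Fin N, h i * (ε (i : ℕ) ω - b (i : ℕ))
          ≤ ∑ i : Fin N, -(|h i| * δ) := Finset.sum_le_sum (fun i _ => hterm i)
        _ = -((∑ i : Fin N, |h i|) * δ) := by
            rw [Finset.sum_neg_distrib, Finset.sum_mul]
        _ ≤ -δ := by nlinarith
    simp only [Set.mem_setOf_eq]
    linarith
  calc ENNReal.ofReal α < ENNReal.ofReal r :=
        (ENNReal.ofReal_lt_ofReal_iff hr0).2 hαr
    _ = q := by rw [hr, ENNReal.ofReal_toReal hqfin]
    _ ≤ ∏ i ∈ Finset.range N, P (A i) := Finset.prod_le_prod' hmle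
    _ = P (⋂ i ∈ Finset.range N, A i) := hprod.symm
    _ ≤ P {ω | ∑ i : Fin N, h i * (ε (i : ℕ) ω - b (i : ℕ)) < -α} := measure_mono hsubset
end

section
/- Under Assumptions 1, 2, 3 and 4, there exists α>0 such that for every h∈ℓ² with ‖h‖_{ℓ²}=1 one has P(⟨h,ε⟩ < −α) > α, where ⟨h,ε⟩ denotes the L²(P)-limit of the partial sums ∑_{i=1}^n h_i ε_i (quantitative no-arbitrage condition in the large market). -/
open MeasureTheory Filter Topology ProbabilityTheory
open scoped ENNReal

/-- Convergence in `L²(P)` of the partial sums `∑_{i<n} Y i` to `S`. -/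
def IsL2Limit {Ω : Type*} [MeasurableSpace Ω] (P : Measure Ω)
    (Y : ℕ → Ω → ℝ) (S : Ω → ℝ) : Prop :=
  Tendsto (fun n => eLpNorm (fun ω => (∑ i ∈ Finset.range n, Y i ω) - S ω) 2 P)
    atTop (𝓝 0)

lemma cube_bound (a b : ℝ) :
    |a + b| ^ 3 ≤ |a| ^ 3 + 3 * (a * |a|) * b + 3 * |a| * b ^ 2 + 3 * |b| ^ 3 := by
  rcases abs_cases a with ⟨ha, ha'⟩ | ⟨ha, ha'⟩ <;>
  rcases abs_cases b with ⟨hb, hb'⟩ | ⟨hb, hb'⟩ <;>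
  rcases abs_cases (a+b) with ⟨hab, hab'⟩ | ⟨hab, hab'⟩ <;>
  rw [ha, hb, hab] <;>
  nlinarith [sq_nonneg (a+b), sq_nonneg (a-b), sq_nonneg a, sq_nonneg b,
    sq_nonneg (a+2*b), sq_nonneg (2*a+b)]

lemma amgm_bound (K s : ℝ) (hK : 0 < K) : s ^ 2 ≤ K * |s| + |s| ^ 3 / (4 * K) := by
  have h1 : 0 ≤ |s| * (|s| - 2 * K) ^ 2 := mul_nonneg (abs_nonneg s) (sq_nonneg _)
  have h2 : |s| * |s| = s ^ 2 := by rw [← abs_mul, abs_mul_self]; ring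
  have h3 : (0:ℝ) < 4 * K := by linarith
  rw [← sub_le_iff_le_add', le_div_iff₀ h3]
  nlinarith [abs_nonneg s]

lemma third_moment_step {Ω : Type*} [MeasurableSpace Ω] (P : Measure Ω) [IsProbabilityMeasure P]
    (Y Z : Ω → ℝ) (hYm : Measurable Y) (hZm : Measurable Z) (hInd : IndepFun Y Z P)
    (hY2 : MemLp Y 2 P) (hZ2 : MemLp Z 2 P)
    (hY3 : Integrable (fun ω => |Y ω| ^ 3) P) (hZ3 : Integrable (fun ω => |Z ω| ^ 3) P)
    (hZmean : ∫ ω, Z ω ∂P = 0) :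
    Integrable (fun ω => |Y ω + Z ω| ^ 3) P ∧
      ∫ ω, |Y ω + Z ω| ^ 3 ∂P ≤
        ∫ ω, |Y ω| ^ 3 ∂P + 3 * (∫ ω, |Y ω| ∂P) * (∫ ω, (Z ω) ^ 2 ∂P)
          + 3 * ∫ ω, |Z ω| ^ 3 ∂P := by
  have hYint : Integrable Y P := hY2.integrable one_le_two
  have hZint : Integrable Z P := hZ2.integrable one_le_two
  have hYsq : Integrable (fun ω => Y ω ^ 2) P := hY2.integrable_sq
  have hZsq : Integrable (fun ω => Z ω ^ 2) P := hZ2.integrable_sq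
  have hYY : Integrable (fun ω => Y ω * |Y ω|) P := by
    refine Integrable.mono' hYsq ((hYm.mul hYm.abs).aestronglyMeasurable) ?_
    filter_upwards with ω
    have : abs (Y ω * abs (Y ω)) = Y ω ^ 2 := by rw [abs_mul, abs_abs, ← sq_abs, sq]
    rw [Real.norm_eq_abs, this]
  have hInd1 : IndepFun (fun ω => Y ω * |Y ω|) Z P :=
    hInd.comp (measurable_id.mul measurable_abs) measurable_id
  have hInd2 : IndepFun (fun ω => |Y ω|) (fun ω => Z ω ^ 2) P :=
    hInd.comp measurable_abs (measurable_id.pow_const 2)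
  have hprod1 : Integrable (fun ω => (Y ω * |Y ω|) * Z ω) P := hInd1.integrable_mul hYY hZint
  have hprod2 : Integrable (fun ω => |Y ω| * Z ω ^ 2) P := hInd2.integrable_mul hYint.abs hZsq
  have hint1 : ∫ ω, (Y ω * |Y ω|) * Z ω ∂P = 0 := by
    have := hInd1.integral_mul_eq_mul_integral hYY.aestronglyMeasurable hZint.aestronglyMeasurable
    simpa [hZmean] using this
  have hint2 : ∫ ω, |Y ω| * Z ω ^ 2 ∂P = (∫ ω, |Y ω| ∂P) * ∫ ω, (Z ω) ^ 2 ∂P :=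
    hInd2.integral_mul_eq_mul_integral hYint.abs.aestronglyMeasurable hZsq.aestronglyMeasurable
  have hbound : ∀ ω, |Y ω + Z ω| ^ 3 ≤
      |Y ω| ^ 3 + 3 * ((Y ω * |Y ω|) * Z ω) + 3 * (|Y ω| * Z ω ^ 2) + 3 * |Z ω| ^ 3 := by
    intro ω
    have := cube_bound (Y ω) (Z ω)
    linarith [this]
  have hRHSint : Integrable (fun ω =>
      |Y ω| ^ 3 + 3 * ((Y ω * |Y ω|) * Z ω) + 3 * (|Y ω| * Z ω ^ 2) + 3 * |Z ω| ^ 3) P :=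
    ((hY3.add (hprod1.const_mul 3)).add (hprod2.const_mul 3)).add (hZ3.const_mul 3)
  have hLHSint : Integrable (fun ω => |Y ω + Z ω| ^ 3) P := by
    refine Integrable.mono' hRHSint (((hYm.add hZm).abs.pow_const 3).aestronglyMeasurable) ?_
    filter_upwards with ω
    rw [Real.norm_eq_abs, abs_of_nonneg (by positivity)]
    exact hbound ω
  refine ⟨hLHSint, ?_⟩
  calc ∫ ω, |Y ω + Z ω| ^ 3 ∂P
      ≤ ∫ ω, (|Y ω| ^ 3 + 3 * ((Y ω * |Y ω|) * Z ω) + 3 * (|Y ω| * Z ω ^ 2) + 3 * |Z ω| ^ 3) ∂P :=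
        integral_mono hLHSint hRHSint hbound
    _ = ∫ ω, |Y ω| ^ 3 ∂P + 3 * (∫ ω, (Y ω * |Y ω|) * Z ω ∂P) + 3 * (∫ ω, |Y ω| * Z ω ^ 2 ∂P)
          + 3 * ∫ ω, |Z ω| ^ 3 ∂P := by
        have i1 : Integrable (fun ω => |Y ω| ^ 3 + 3 * ((Y ω * |Y ω|) * Z ω)) P :=
          hY3.add (hprod1.const_mul 3)
        have i2 : Integrable (fun ω => |Y ω| ^ 3 + 3 * ((Y ω * |Y ω|) * Z ω)
            + 3 * (|Y ω| * Z ω ^ 2)) P := i1.add (hprod2.const_mul 3)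
        have i3 : Integrable (fun ω => 3 * (|Y ω| * Z ω ^ 2)) P := hprod2.const_mul 3
        have i4 : Integrable (fun ω => 3 * |Z ω| ^ 3) P := hZ3.const_mul 3
        rw [integral_add i2 i4, integral_add i1 i3, integral_add hY3 (hprod1.const_mul 3),
          integral_const_mul, integral_const_mul, integral_const_mul]
    _ = ∫ ω, |Y ω| ^ 3 ∂P + 3 * (∫ ω, |Y ω| ∂P) * (∫ ω, (Z ω) ^ 2 ∂P) + 3 * ∫ ω, |Z ω| ^ 3 ∂P := by
        rw [hint1, hint2]; ring

set_option maxHeartbeats 2000000 in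
/-- under Assumptions 1, 2, 3 and 4 there is `α > 0` such that for
every `h ∈ ℓ²` with `‖h‖_{ℓ²} = 1` one has `P(⟨h,ε⟩ < -α) > α`, where `⟨h,ε⟩`
is the `L²(P)`-limit of the partial sums `∑_{i=1}^n h_i ε_i`. -/
theorem quantitative_no_arbitrage_large_market
    {Ω : Type*} [MeasurableSpace Ω] (P : Measure Ω) [IsProbabilityMeasure P]
    (ε : ℕ → Ω → ℝ) (b : ℕ → ℝ)
    (hmeas : ∀ i, Measurable (ε i))
    (hL2 : ∀ i, MemLp (ε i) 2 P)
    (hindep : iIndepFun ε P)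
    (hmean : ∀ i, ∫ ω, ε i ω ∂P = 0)
    (hvar : ∀ i, ∫ ω, (ε i ω) ^ 2 ∂P = 1)
    (hb : Summable (fun i => (b i) ^ 2))
    (hNA : ∀ i, 0 < P {ω | b i < ε i ω} ∧ 0 < P {ω | ε i ω < b i})
    (hmom3 : ∃ C : ℝ≥0∞, C ≠ ⊤ ∧
      ∀ i, ∫⁻ ω, ENNReal.ofReal (|ε i ω| ^ 3) ∂P ≤ C) :
    ∃ α : ℝ, 0 < α ∧
      ∀ h : ℕ → ℝ, Summable (fun i => (h i) ^ 2) → (∑' i, (h i) ^ 2) = 1 →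
        ∀ S : Ω → ℝ, MemLp S 2 P → IsL2Limit P (fun i ω => h i * ε i ω) S →
          ENNReal.ofReal α < P {ω | S ω < -α} := by
  classical
  obtain ⟨C, hCtop, hC⟩ := hmom3
  set CR : ℝ := C.toReal with hCRdef
  have hCR0 : 0 ≤ CR := ENNReal.toReal_nonneg
  -- third moments of ε
  have heps3_int : ∀ i, Integrable (fun ω => |ε i ω| ^ 3) P := by
    intro i
    refine ⟨((hmeas i).abs.pow_const 3).aestronglyMeasurable, ?_⟩
    rw [hasFiniteIntegral_iff_ofReal (ae_of_all _ fun ω => by positivity)]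
    exact lt_of_le_of_lt (hC i) hCtop.lt_top
  have heps3_le : ∀ i, ∫ ω, |ε i ω| ^ 3 ∂P ≤ CR := by
    intro i
    rw [integral_eq_lintegral_of_nonneg_ae (ae_of_all _ fun ω => by positivity)
      ((hmeas i).abs.pow_const 3).aestronglyMeasurable]
    exact ENNReal.toReal_mono hCtop (hC i)
  -- constants
  set K : ℝ := 3 + 3 * CR with hKdef
  have hK3 : (3:ℝ) ≤ K := by simp only [hKdef]; linarith
  have hKpos : (0:ℝ) < K := by linarith
  set m : ℝ := 3 / (4 * K) with hmdef
  have hm_pos : 0 < m := by positivity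
  have hm_le : m ≤ 1/4 := by
    rw [hmdef, div_le_iff₀ (by positivity)]; linarith
  set α : ℝ := m ^ 2 / 16 with hαdef
  have hα_pos : 0 < α := by positivity
  set c : ℝ := m / 2 - m ^ 2 / 16 with hcdef
  have hc_pos : 0 < c := by rw [hcdef]; nlinarith
  have hαc : α < c ^ 2 := by
    rw [hαdef, hcdef]
    nlinarith [hm_pos, hm_le, sq_nonneg m]
  have hcα : c + α = m / 2 := by rw [hcdef, hαdef]; ring
  refine ⟨α, hα_pos, ?_⟩
  intro h hsum htsum S hS hlim
  -- the weighted variables and partial sums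
  set X : ℕ → Ω → ℝ := fun i ω => h i * ε i ω with hXdef
  set T : ℕ → Ω → ℝ := fun n ω => ∑ i ∈ Finset.range n, X i ω with hTdef
  have hlim' : Tendsto (fun n => eLpNorm (fun ω => T n ω - S ω) 2 P) atTop (𝓝 0) := hlim
  -- facts about h
  have hone : ∀ i, h i ^ 2 ≤ 1 := by
    intro i
    calc h i ^ 2 ≤ ∑' j, h j ^ 2 := Summable.le_tsum hsum i fun j _ => sq_nonneg _
      _ = 1 := htsum
  have hsum_le : ∀ n, ∑ i ∈ Finset.range n, h i ^ 2 ≤ 1 := by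
    intro n
    calc ∑ i ∈ Finset.range n, h i ^ 2 ≤ ∑' j, h j ^ 2 :=
          Summable.sum_le_tsum _ (fun i _ => sq_nonneg _) hsum
      _ = 1 := htsum
  -- facts about X
  have hXmeas : ∀ i, Measurable (X i) := fun i => (hmeas i).const_mul _
  have hXindep : iIndepFun X P :=
    hindep.comp (fun i t => h i * t) (fun i => measurable_id.const_mul _)
  have hXL2 : ∀ i, MemLp (X i) 2 P := fun i => (hL2 i).const_mul (h i)
  have hXint : ∀ i, Integrable (X i) P := fun i => (hXL2 i).integrable one_le_two
  have hXsq_int : ∀ i, Integrable (fun ω => (X i ω) ^ 2) P := fun i => (hXL2 i).integrable_sq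
  have hXmean : ∀ i, ∫ ω, X i ω ∂P = 0 := by
    intro i
    simp only [hXdef]
    rw [integral_const_mul, hmean i, mul_zero]
  have hXsq : ∀ i, ∫ ω, (X i ω) ^ 2 ∂P = h i ^ 2 := by
    intro i
    simp only [hXdef, mul_pow]
    rw [integral_const_mul, hvar i, mul_one]
  have hX3eq : ∀ i, (fun ω => |X i ω| ^ 3) = fun ω => |h i| ^ 3 * |ε i ω| ^ 3 := by
    intro i; funext ω; simp only [hXdef]; rw [abs_mul, mul_pow]
  have hX3int : ∀ i, Integrable (fun ω => |X i ω| ^ 3) P := by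
    intro i; rw [hX3eq i]; exact (heps3_int i).const_mul _
  have hX3le : ∀ i, ∫ ω, |X i ω| ^ 3 ∂P ≤ h i ^ 2 * CR := by
    intro i
    rw [hX3eq i, integral_const_mul]
    have habs1 : |h i| ≤ 1 := by nlinarith [sq_abs (h i), abs_nonneg (h i), hone i]
    have h1 : |h i| ^ 3 ≤ h i ^ 2 := by nlinarith [abs_nonneg (h i), sq_abs (h i)]
    have h2 : (0:ℝ) ≤ ∫ ω, |ε i ω| ^ 3 ∂P := integral_nonneg fun ω => by positivity
    exact mul_le_mul h1 (heps3_le i) h2 (sq_nonneg _)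
  -- facts about T
  have hTmeas : ∀ n, Measurable (T n) := by
    intro n
    exact Finset.measurable_sum _ (fun i _ => hXmeas i)
  have hTL2 : ∀ n, MemLp (T n) 2 P := fun n => memLp_finset_sum _ (fun i _ => hXL2 i)
  have hTint : ∀ n, Integrable (T n) P := fun n => (hTL2 n).integrable one_le_two
  have hTsq_int : ∀ n, Integrable (fun ω => (T n ω) ^ 2) P := fun n => (hTL2 n).integrable_sq
  have hTmean : ∀ n, ∫ ω, T n ω ∂P = 0 := by
    intro n
    simp only [hTdef]
    rw [integral_finset_sum _ (fun i _ => hXint i)]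
    exact Finset.sum_eq_zero fun i _ => hXmean i
  have hTXindep : ∀ n, IndepFun (T n) (X n) P := by
    intro n
    have h1 := hXindep.indepFun_sum_range_succ hXmeas n
    have he : (∑ j ∈ Finset.range n, X j) = T n := by
      funext ω; simp [hTdef, Finset.sum_apply]
    rwa [he] at h1
  have hTsq : ∀ n, ∫ ω, (T n ω) ^ 2 ∂P = ∑ i ∈ Finset.range n, h i ^ 2 := by
    intro n
    induction n with
    | zero => simp [hTdef]
    | succ n ih =>
      have hTX : Integrable (fun ω => T n ω * X n ω) P :=
        (hTXindep n).integrable_mul (hTint n) (hXint n)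
      have hITX : ∫ ω, T n ω * X n ω ∂P = 0 := by
        have h2 := (hTXindep n).integral_mul_eq_mul_integral (hTint n).aestronglyMeasurable (hXint n).aestronglyMeasurable
        have h3 : (fun ω => T n ω * X n ω) = T n * X n := rfl
        rw [h3, h2, hTmean n, zero_mul]
      have hexp : (fun ω => (T (n+1) ω) ^ 2)
          = fun ω => (T n ω) ^ 2 + 2 * (T n ω * X n ω) + (X n ω) ^ 2 := by
        funext ω
        have : T (n+1) ω = T n ω + X n ω := by simp [hTdef, Finset.sum_range_succ]
        rw [this]; ring
      have i1 : Integrable (fun ω => (T n ω) ^ 2 + 2 * (T n ω * X n ω)) P :=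
        (hTsq_int n).add (hTX.const_mul 2)
      rw [hexp, integral_add i1 (hXsq_int n), integral_add (hTsq_int n) (hTX.const_mul 2),
        integral_const_mul, hITX, hXsq n, ih, Finset.sum_range_succ]
      ring
  have hTabs_le : ∀ n, ∫ ω, |T n ω| ∂P ≤ 1 := by
    intro n
    have hmono : ∫ ω, |T n ω| ∂P ≤ ∫ ω, (1 + (T n ω) ^ 2) / 2 ∂P := by
      refine integral_mono (hTint n).abs (((integrable_const 1).add (hTsq_int n)).div_const 2) ?_
      intro ω
      nlinarith [sq_nonneg (|T n ω| - 1), sq_abs (T n ω)]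
    rw [integral_div, integral_add (integrable_const 1) (hTsq_int n), integral_const,
      hTsq n] at hmono
    simp only [measureReal_def, measure_univ, ENNReal.toReal_one, smul_eq_mul, one_mul] at hmono
    linarith [hsum_le n, hmono]
  have hT3 : ∀ n, Integrable (fun ω => |T n ω| ^ 3) P ∧
      ∫ ω, |T n ω| ^ 3 ∂P ≤ (3 + 3 * CR) * ∑ i ∈ Finset.range n, h i ^ 2 := by
    intro n
    induction n with
    | zero =>
      constructor
      · have : (fun ω => |T 0 ω| ^ 3) = fun _ => (0:ℝ) := by
          funext ω; simp [hTdef]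
        rw [this]; exact integrable_const 0
      · have : (fun ω => |T 0 ω| ^ 3) = fun _ => (0:ℝ) := by
          funext ω; simp [hTdef]
        rw [this]; simp
    | succ n ih =>
      obtain ⟨ih_int, ih_le⟩ := ih
      obtain ⟨s_int, s_le⟩ := third_moment_step P (T n) (X n) (hTmeas n) (hXmeas n)
        (hTXindep n) (hTL2 n) (hXL2 n) ih_int (hX3int n) (hXmean n)
      have hsplit : (fun ω => |T (n+1) ω| ^ 3) = fun ω => |T n ω + X n ω| ^ 3 := by
        funext ω; simp [hTdef, Finset.sum_range_succ]
      constructor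
      · rw [hsplit]; exact s_int
      · have e1 := hXsq n
        have b1 : 3 * (∫ ω, |T n ω| ∂P) * (∫ ω, (X n ω) ^ 2 ∂P) ≤ 3 * h n ^ 2 := by
          rw [e1]
          have h0 : (0:ℝ) ≤ ∫ ω, |T n ω| ∂P := integral_nonneg fun ω => abs_nonneg _
          nlinarith [hTabs_le n, sq_nonneg (h n)]
        have b2 : 3 * ∫ ω, |X n ω| ^ 3 ∂P ≤ 3 * (h n ^ 2 * CR) := by linarith [hX3le n]
        have goal_eq : (3 + 3 * CR) * ∑ i ∈ Finset.range (n+1), h i ^ 2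
            = (3 + 3 * CR) * (∑ i ∈ Finset.range n, h i ^ 2) + (3 * h n ^ 2 + 3 * (h n ^ 2 * CR)) := by
          rw [Finset.sum_range_succ]; ring
        rw [hsplit, goal_eq]
        linarith [s_le, ih_le, b1, b2]
  have hK_bound : ∀ n, ∫ ω, |T n ω| ^ 3 ∂P ≤ K := by
    intro n
    refine (hT3 n).2.trans ?_
    calc (3 + 3 * CR) * ∑ i ∈ Finset.range n, h i ^ 2 ≤ (3 + 3 * CR) * 1 :=
          mul_le_mul_of_nonneg_left (hsum_le n) (by linarith)
      _ = K := by rw [hKdef]; ring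
  -- L² machinery
  set fn := fun n => MemLp.toLp (T n) (hTL2 n) with hfndef
  set fS := MemLp.toLp S hS with hfSdef
  have hnorm : ∀ n, ‖fn n - fS‖ = (eLpNorm (fun ω => T n ω - S ω) 2 P).toReal := by
    intro n
    rw [Lp.norm_def]
    congr 1
    apply eLpNorm_congr_ae
    filter_upwards [MemLp.coeFn_toLp (hTL2 n), MemLp.coeFn_toLp hS, Lp.coeFn_sub (fn n) fS]
      with ω h1 h2 h3
    rw [hfndef, hfSdef] at h3
    rw [h3, Pi.sub_apply, h1, h2]
  have hfn_tendsto : Tendsto fn atTop (𝓝 fS) := by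
    rw [tendsto_iff_norm_sub_tendsto_zero]
    have h0 := (ENNReal.tendsto_toReal (by simp : (0:ℝ≥0∞) ≠ ⊤)).comp hlim'
    simp only [Function.comp_def, ENNReal.toReal_zero] at h0
    simpa only [hnorm] using h0
  have hinner_eq : ∀ (u v : Ω → ℝ) (hu : MemLp u 2 P) (hv : MemLp v 2 P),
      (inner ℝ (MemLp.toLp u hu) (MemLp.toLp v hv) : ℝ) = ∫ ω, u ω * v ω ∂P := by
    intro u v hu hv
    rw [L2.inner_def]
    apply integral_congr_ae
    filter_upwards [hu.coeFn_toLp, hv.coeFn_toLp] with ω h1 h2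
    rw [h1, h2, RCLike.inner_apply', conj_trivial]
  have hSsq : ∫ ω, S ω ^ 2 ∂P = 1 := by
    have t1 : Tendsto (fun n => (inner ℝ (fn n) (fn n) : ℝ)) atTop (𝓝 (inner ℝ fS fS)) :=
      hfn_tendsto.inner hfn_tendsto
    have t2 : ∀ n, (inner ℝ (fn n) (fn n) : ℝ) = ∑ i ∈ Finset.range n, h i ^ 2 := by
      intro n
      rw [hfndef]
      rw [hinner_eq _ _ (hTL2 n) (hTL2 n)]
      rw [← hTsq n]
      congr 1
      funext ω
      rw [sq]
    simp only [t2] at t1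
    have t3 : Tendsto (fun n => ∑ i ∈ Finset.range n, h i ^ 2) atTop (𝓝 1) := by
      have := hsum.hasSum.tendsto_sum_nat
      rwa [htsum] at this
    have t4 : (inner ℝ fS fS : ℝ) = 1 := tendsto_nhds_unique t1 t3
    rw [hfSdef, hinner_eq _ _ hS hS] at t4
    rw [← t4]
    congr 1
    funext ω
    rw [sq]
  have hSmean : ∫ ω, S ω ∂P = 0 := by
    set one := MemLp.toLp (fun _ => (1:ℝ)) (memLp_const (1:ℝ) : MemLp _ 2 P) with honedef
    have t1 : Tendsto (fun n => (inner ℝ (fn n) one : ℝ)) atTop (𝓝 (inner ℝ fS one)) :=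
      hfn_tendsto.inner tendsto_const_nhds
    have t2 : ∀ n, (inner ℝ (fn n) one : ℝ) = 0 := by
      intro n
      rw [hfndef, honedef, hinner_eq _ _ (hTL2 n) (memLp_const (1:ℝ) : MemLp _ 2 P)]
      simp only [mul_one]
      exact hTmean n
    simp only [t2] at t1
    have t4 : (inner ℝ fS one : ℝ) = 0 := tendsto_nhds_unique t1 tendsto_const_nhds
    rw [hfSdef, honedef, hinner_eq _ _ hS (memLp_const (1:ℝ) : MemLp _ 2 P)] at t4
    simpa only [mul_one] using t4
  -- third moment of S via Fatou along an a.e. convergent subsequence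
  have hTIM : TendstoInMeasure P T atTop S := by
    refine tendstoInMeasure_of_tendsto_eLpNorm (p := 2) (by norm_num)
      (fun n => (hTL2 n).aestronglyMeasurable) hS.aestronglyMeasurable ?_
    exact hlim'
  obtain ⟨ns, hns_mono, hae⟩ := hTIM.exists_seq_tendsto_ae
  have hfatou : ∫⁻ ω, ENNReal.ofReal (|S ω| ^ 3) ∂P ≤ ENNReal.ofReal K := by
    have hlim_ae : ∀ᵐ ω ∂P, ENNReal.ofReal (|S ω| ^ 3)
        = liminf (fun k => ENNReal.ofReal (|T (ns k) ω| ^ 3)) atTop := by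
      filter_upwards [hae] with ω hω
      have htd : Tendsto (fun k => ENNReal.ofReal (|T (ns k) ω| ^ 3)) atTop
          (𝓝 (ENNReal.ofReal (|S ω| ^ 3))) := by
        apply (ENNReal.continuous_ofReal.tendsto _).comp
        exact (hω.abs).pow 3
      exact htd.liminf_eq.symm
    have step1 : ∫⁻ ω, ENNReal.ofReal (|S ω| ^ 3) ∂P
        ≤ liminf (fun k => ∫⁻ ω, ENNReal.ofReal (|T (ns k) ω| ^ 3) ∂P) atTop := by
      calc ∫⁻ ω, ENNReal.ofReal (|S ω| ^ 3) ∂P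
          = ∫⁻ ω, liminf (fun k => ENNReal.ofReal (|T (ns k) ω| ^ 3)) atTop ∂P :=
            lintegral_congr_ae hlim_ae
        _ ≤ liminf (fun k => ∫⁻ ω, ENNReal.ofReal (|T (ns k) ω| ^ 3) ∂P) atTop :=
            lintegral_liminf_le fun k => ((hTmeas (ns k)).abs.pow_const 3).ennreal_ofReal
    refine step1.trans ?_
    have hk : ∀ k, ∫⁻ ω, ENNReal.ofReal (|T (ns k) ω| ^ 3) ∂P ≤ ENNReal.ofReal K := by
      intro k
      rw [← ofReal_integral_eq_lintegral_ofReal (hT3 (ns k)).1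
        (ae_of_all _ fun ω => by positivity)]
      exact ENNReal.ofReal_le_ofReal (hK_bound (ns k))
    calc liminf (fun k => ∫⁻ ω, ENNReal.ofReal (|T (ns k) ω| ^ 3) ∂P) atTop
        ≤ liminf (fun _ => ENNReal.ofReal K) atTop := liminf_le_liminf (Eventually.of_forall hk)
      _ = ENNReal.ofReal K := liminf_const _
  have hS3int : Integrable (fun ω => |S ω| ^ 3) P := by
    refine ⟨((measurable_abs.comp_aemeasurable hS.aestronglyMeasurable.aemeasurable).pow_const
      3).aestronglyMeasurable, ?_⟩
    rw [hasFiniteIntegral_iff_ofReal (ae_of_all _ fun ω => by positivity)]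
    exact lt_of_le_of_lt hfatou ENNReal.ofReal_lt_top
  have hSabsSM : AEStronglyMeasurable (fun ω => |S ω| ^ 3) P :=
    ((measurable_abs.comp_aemeasurable hS.aestronglyMeasurable.aemeasurable).pow_const
      3).aestronglyMeasurable
  have hS3le : ∫ ω, |S ω| ^ 3 ∂P ≤ K := by
    rw [integral_eq_lintegral_of_nonneg_ae (ae_of_all _ fun ω => by positivity) hSabsSM]
    calc (∫⁻ ω, ENNReal.ofReal (|S ω| ^ 3) ∂P).toReal
        ≤ (ENNReal.ofReal K).toReal := ENNReal.toReal_mono ENNReal.ofReal_ne_top hfatou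
      _ = K := ENNReal.toReal_ofReal (by linarith)
  have hSint : Integrable S P := hS.integrable one_le_two
  have hSsq_int : Integrable (fun ω => S ω ^ 2) P := hS.integrable_sq
  -- lower bound on E|S|
  have hSabs : m ≤ ∫ ω, |S ω| ∂P := by
    have hint : ∫ ω, S ω ^ 2 ∂P ≤ ∫ ω, (K * |S ω| + |S ω| ^ 3 / (4 * K)) ∂P := by
      refine integral_mono hSsq_int ((hSint.abs.const_mul K).add (hS3int.div_const _)) ?_
      intro ω
      exact amgm_bound K (S ω) hKpos
    rw [integral_add (hSint.abs.const_mul K) (hS3int.div_const _), integral_const_mul,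
      integral_div, hSsq] at hint
    have hd : (∫ ω, |S ω| ^ 3 ∂P) / (4 * K) ≤ 1/4 := by
      rw [div_le_iff₀ (by positivity)]
      nlinarith [hS3le]
    rw [hmdef, div_le_iff₀ (by positivity : (0:ℝ) < 4 * K)]
    nlinarith [hint, hd, hKpos]
  -- measurable representative and the event
  set S' := hS.aestronglyMeasurable.mk S with hS'def
  have hS'meas : StronglyMeasurable S' := hS.aestronglyMeasurable.stronglyMeasurable_mk
  have hSS' : S =ᵐ[P] S' := hS.aestronglyMeasurable.ae_eq_mk
  set A := {ω | S' ω < -α} with hAdef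
  have hAm : MeasurableSet A := measurableSet_lt hS'meas.measurable measurable_const
  have hPeq : P {ω | S ω < -α} = P A := by
    apply measure_congr
    filter_upwards [hSS'] with ω hω
    change (S ω < -α) = (S' ω < -α)
    rw [hω]
  -- the negative-part function
  set g := fun ω => (|S ω| - S ω) / 2 with hgdef
  have hgint : Integrable g P := (hSint.abs.sub hSint).div_const 2
  have hg_low : m / 2 ≤ ∫ ω, g ω ∂P := by
    have : ∫ ω, g ω ∂P = ((∫ ω, |S ω| ∂P) - ∫ ω, S ω ∂P) / 2 := by
      simp only [hgdef]
      rw [integral_div, integral_sub hSint.abs hSint]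
    rw [this, hSmean, sub_zero]
    linarith [hSabs]
  -- pointwise comparison
  have hRHS1 : Integrable (fun ω => α + (1/(2*c)) * A.indicator (fun _ => (1:ℝ)) ω) P :=
    (integrable_const α).add (((integrable_const (1:ℝ)).indicator hAm).const_mul _)
  have hRHSint : Integrable
      (fun ω => α + (1/(2*c)) * A.indicator (fun _ => (1:ℝ)) ω + (c/2) * S ω ^ 2) P :=
    hRHS1.add (hSsq_int.const_mul _)
  have hptwise : ∀ᵐ ω ∂P, g ω ≤ α + (1/(2*c)) * A.indicator (fun _ => (1:ℝ)) ω
      + (c/2) * S ω ^ 2 := by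
    filter_upwards [hSS'] with ω hω
    by_cases hA : ω ∈ A
    · rw [Set.indicator_of_mem hA]
      have hSω : S ω < -α := by rw [hω]; exact hA
      have hSneg : S ω < 0 := lt_of_lt_of_le hSω (by linarith)
      have habs : |S ω| = -(S ω) := abs_of_neg hSneg
      have hkey : (0:ℝ) ≤ (c * S ω + 1) ^ 2 / (2 * c) := by positivity
      have hexp : (c * S ω + 1) ^ 2 / (2 * c) = (c/2) * S ω ^ 2 + S ω + 1/(2*c) := by
        field_simp
        ring
      simp only [hgdef, habs]
      nlinarith [hkey, hexp, hα_pos]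
    · rw [Set.indicator_of_notMem hA]
      have hSω : -α ≤ S ω := by
        rw [hω]
        exact not_lt.mp hA
      have h2 : (0:ℝ) ≤ (c/2) * S ω ^ 2 := by positivity
      simp only [hgdef]
      rcases abs_cases (S ω) with ⟨he, hsgn⟩ | ⟨he, hsgn⟩ <;> rw [he] <;>
        simp only [mul_zero] <;> nlinarith [hα_pos]
  have hfinal : m / 2 ≤ α + (1/(2*c)) * (P A).toReal + c/2 := by
    have hmono := integral_mono_ae hgint hRHSint hptwise
    rw [integral_add hRHS1 (hSsq_int.const_mul _), integral_add (integrable_const α)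
      (((integrable_const (1:ℝ)).indicator hAm).const_mul _), integral_const,
      integral_const_mul, integral_const_mul, integral_indicator_const (1:ℝ) hAm, hSsq] at hmono
    simp only [measureReal_def, measure_univ, ENNReal.toReal_one, smul_eq_mul, one_mul, mul_one] at hmono
    linarith [hg_low, hmono]
  have hPr : c ^ 2 ≤ (P A).toReal := by
    have hc2 : c / 2 ≤ (1/(2*c)) * (P A).toReal := by linarith [hfinal, hcα]
    have h2c : (0:ℝ) < 2*c := by linarith
    have hmul := mul_le_mul_of_nonneg_left hc2 h2c.le
    have hr : 2*c*(1/(2*c)*(P A).toReal) = (P A).toReal := by field_simp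
    calc c ^ 2 = 2*c*(c/2) := by ring
      _ ≤ 2*c*(1/(2*c)*(P A).toReal) := hmul
      _ = (P A).toReal := hr
  rw [hPeq]
  calc ENNReal.ofReal α < ENNReal.ofReal ((P A).toReal) := by
        rw [ENNReal.ofReal_lt_ofReal_iff (lt_of_lt_of_le (lt_of_lt_of_le hα_pos (le_of_lt (lt_of_lt_of_le hαc hPr))) le_rfl)]
        exact lt_of_lt_of_le hαc hPr
    _ = P A := ENNReal.ofReal_toReal (measure_ne_top P A)
end
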